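/- The three conditions defining complete resource pooling are equivalent: for probability vectors α on C and β on S and a bipartite graph G with neighborhoods S(·), C(·), and U(S) := complement of C(complement of S), the following are equivalent: (a) α_C < β_{S(C)} for all nonempty proper C ⊂ 𝒞; (b) β_S < α_{C(S)} for all nonempty proper S ⊂ 𝒮; (c) α_{U(S)} < β_S for all nonempty proper S ⊂ 𝒮. (Assuming every agent type has at least one compatible good type and vice versa.) -/

import Mathlib

set_option maxHeartbeats 1000000


open Finset

private lemma aux_crp {I J : ℕ} (G : Fin J → Fin I → Bool)
    (α : Fin I → ℝ) (β : Fin J → ℝ)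
    (hα : ∀ i, 0 < α i) (hβ : ∀ j, 0 < β j)
    (hα1 : ∑ i, α i = 1) (hβ1 : ∑ j, β j = 1)
    (hgoods : ∀ j : Fin J, ∃ i : Fin I, G j i)
    (ha : ∀ C : Finset (Fin I), C.Nonempty → C ≠ Finset.univ →
        (∑ i ∈ C, α i) < ∑ j ∈ Finset.univ.filter (fun j => ∃ i ∈ C, G j i), β j) :
    ∀ S : Finset (Fin J), S.Nonempty → S ≠ Finset.univ →
        (∑ j ∈ S, β j) < ∑ i ∈ Finset.univ.filter (fun i => ∃ j ∈ S, G j i), α i := by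
  intro S hS hSne
  set CS := Finset.univ.filter (fun i => ∃ j ∈ S, G j i) with hCS
  clear_value CS
  have hCSne : CS.Nonempty := by
    obtain ⟨j, hj⟩ := hS
    obtain ⟨i, hi⟩ := hgoods j
    refine ⟨i, ?_⟩
    simp only [hCS, Finset.mem_filter, Finset.mem_univ, true_and]
    exact ⟨j, hj, hi⟩
  have hβS : ∑ j ∈ S, β j < 1 := by
    have hne : (Finset.univ \ S).Nonempty := by
      rw [Finset.sdiff_nonempty]
      intro h
      exact hSne (Finset.univ_subset_iff.mp h)
    have hpos : 0 < ∑ j ∈ Finset.univ \ S, β j :=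
      Finset.sum_pos (fun j _ => hβ j) hne
    have e := Finset.sum_sdiff_eq_sub (Finset.subset_univ S) (f := β)
    rw [hβ1] at e
    linarith
  by_cases hC : CS = Finset.univ
  · rw [hC, hα1]; exact hβS
  · have hCne : (Finset.univ \ CS).Nonempty := by
      rw [Finset.sdiff_nonempty]
      intro h
      exact hC (Finset.univ_subset_iff.mp h)
    have hCproper : Finset.univ \ CS ≠ Finset.univ := by
      intro h
      obtain ⟨i, hi⟩ := hCSne
      have : i ∈ Finset.univ \ CS := by rw [h]; exact Finset.mem_univ i
      rw [Finset.mem_sdiff] at this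
      exact this.2 hi
    have key := ha (Finset.univ \ CS) hCne hCproper
    have hsub : Finset.univ.filter (fun j => ∃ i ∈ Finset.univ \ CS, G j i)
        ⊆ Finset.univ \ S := by
      intro j hj
      simp only [Finset.mem_filter, Finset.mem_univ, true_and, Finset.mem_sdiff] at hj ⊢
      obtain ⟨i, hi, hGi⟩ := hj
      intro hjS
      exact hi (by
        simp only [hCS, Finset.mem_filter, Finset.mem_univ, true_and]
        exact ⟨j, hjS, hGi⟩)
    have hle : ∑ j ∈ Finset.univ.filter (fun j => ∃ i ∈ Finset.univ \ CS, G j i), β j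
        ≤ ∑ j ∈ Finset.univ \ S, β j :=
      Finset.sum_le_sum_of_subset_of_nonneg hsub (fun j _ _ => (hβ j).le)
    have e1 := Finset.sum_sdiff_eq_sub (Finset.subset_univ CS) (f := α)
    have e2 := Finset.sum_sdiff_eq_sub (Finset.subset_univ S) (f := β)
    rw [hα1] at e1; rw [hβ1] at e2
    have key' : (∑ i ∈ Finset.univ \ CS, α i)
        < ∑ j ∈ Finset.univ.filter (fun j => ∃ i ∈ Finset.univ \ CS, G j i), β j := by
      convert key using 4
    linarith

/-- Equivalence of the three conditions defining complete resource pooling. -/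
theorem stmt_17 {I J : ℕ} (G : Fin J → Fin I → Bool)
    (α : Fin I → ℝ) (β : Fin J → ℝ)
    (hα : ∀ i, 0 < α i) (hβ : ∀ j, 0 < β j)
    (hα1 : ∑ i, α i = 1) (hβ1 : ∑ j, β j = 1)
    (hagents : ∀ i : Fin I, ∃ j : Fin J, G j i)
    (hgoods : ∀ j : Fin J, ∃ i : Fin I, G j i) :
    (((∀ C : Finset (Fin I), C.Nonempty → C ≠ Finset.univ →
        (∑ i ∈ C, α i) < ∑ j ∈ Finset.univ.filter (fun j => ∃ i ∈ C, G j i), β j) ↔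
      (∀ S : Finset (Fin J), S.Nonempty → S ≠ Finset.univ →
        (∑ j ∈ S, β j) < ∑ i ∈ Finset.univ.filter (fun i => ∃ j ∈ S, G j i), α i)) ∧
     ((∀ S : Finset (Fin J), S.Nonempty → S ≠ Finset.univ →
        (∑ j ∈ S, β j) < ∑ i ∈ Finset.univ.filter (fun i => ∃ j ∈ S, G j i), α i) ↔
      (∀ S : Finset (Fin J), S.Nonempty → S ≠ Finset.univ →
        (∑ i ∈ Finset.univ \
            Finset.univ.filter (fun i => ∃ j ∈ Finset.univ \ S, G j i), α i)
          < ∑ j ∈ S, β j))) := by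
  have hbc : ∀ S : Finset (Fin J), S.Nonempty → S ≠ Finset.univ →
      (((∑ i ∈ Finset.univ \
            Finset.univ.filter (fun i => ∃ j ∈ Finset.univ \ S, G j i), α i)
          < ∑ j ∈ S, β j) ↔
       ((∑ j ∈ Finset.univ \ S, β j) <
          ∑ i ∈ Finset.univ.filter (fun i => ∃ j ∈ Finset.univ \ S, G j i), α i)) := by
    intro S hS hSne
    have e1 := Finset.sum_sdiff_eq_sub
      (Finset.subset_univ (Finset.univ.filter (fun i => ∃ j ∈ Finset.univ \ S, G j i))) (f := α)
    have e2 := Finset.sum_sdiff_eq_sub (Finset.subset_univ S) (f := β)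
    rw [hα1] at e1; rw [hβ1] at e2
    constructor <;> intro h <;> linarith
  refine ⟨⟨fun h => aux_crp G α β hα hβ hα1 hβ1 hgoods h,
           fun h => aux_crp (fun i j => G j i) β α hβ hα hβ1 hα1 hagents h⟩, ?_, ?_⟩
  · intro hb S hS hSne
    have hS' : (Finset.univ \ S).Nonempty := by
      rw [Finset.sdiff_nonempty]
      intro h; exact hSne (Finset.univ_subset_iff.mp h)
    have hS'ne : Finset.univ \ S ≠ Finset.univ := by
      intro h
      obtain ⟨j, hj⟩ := hS
      have : j ∈ Finset.univ \ S := by rw [h]; exact Finset.mem_univ j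
      rw [Finset.mem_sdiff] at this
      exact this.2 hj
    have h' := hb _ hS' hS'ne
    have hx := (hbc S hS hSne).mpr (by convert h' using 4)
    convert hx using 5
  · intro hc S hS hSne
    have hS' : (Finset.univ \ S).Nonempty := by
      rw [Finset.sdiff_nonempty]
      intro h; exact hSne (Finset.univ_subset_iff.mp h)
    have hS'ne : Finset.univ \ S ≠ Finset.univ := by
      intro h
      obtain ⟨j, hj⟩ := hS
      have : j ∈ Finset.univ \ S := by rw [h]; exact Finset.mem_univ j
      rw [Finset.mem_sdiff] at this
      exact this.2 hj
    have hcc := hc _ hS' hS'ne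
    have h2 := (hbc _ hS' hS'ne)
    have h3 := h2.mp (by convert hcc using 5)
    rw [Finset.sdiff_sdiff_self_left, Finset.univ_inter] at h3
    convert h3 using 4
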